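/- Let H be a Hopf *-algebra, B a right H-module *-algebra, M a right H-equivariant B-*-bimodule, and ∂ : B → M an H-equivariant *-derivation. The map MC[∂] : ZS¹_ℓ(H;B,M) → ZH¹_ℓ(H;M), defined by MC[∂](σ)(h) := −∂σ(h₍₁₎)·σ*(h₍₂₎), is a group 1-cocycle for the conjugation action: MC[∂](σ⋆τ) = MC[∂](σ) + σ ⊳ MC[∂](τ), where σ ⊳ μ := σ⋆μ⋆σ⁻¹. -/

import Mathlib

open TensorProduct

section ConvolutionFramework

variable {k : Type*} [CommRing k] [StarRing k]
variable {H : Type*} [Ring H] [HopfAlgebra k H] [StarRing H] [StarModule k H]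
variable {B : Type*} [Ring B] [Algebra k B] [StarRing B] [StarModule k B]
variable {M : Type*} [AddCommGroup M] [Module k M] [StarAddMonoid M] [StarModule k M]

/-- The convolution product on `C(H,B) = Hom_k(H,B)`:
`(f ⋆ g)(h) = f(h₍₁₎) g(h₍₂₎)`. -/
noncomputable def conv (f g : H →ₗ[k] B) : H →ₗ[k] B :=
  LinearMap.mul' k B ∘ₗ TensorProduct.map f g ∘ₗ Coalgebra.comul

/-- The convolution unit `ε(·) 1_B`. -/
noncomputable def convOne : H →ₗ[k] B :=
  Algebra.linearMap k B ∘ₗ Coalgebra.counit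

/-- The involution on the convolution bimodule: `f*(h) = (f (S(h)*))*`. -/
noncomputable def convStar (f : H →ₗ[k] M) : H →ₗ[k] M where
  toFun h := star (f (star (HopfAlgebra.antipode (R := k) h)))
  map_add' x y := by simp
  map_smul' r x := by simp [star_smul]

/-- The `star ⊗ star` map on `H ⊗ H` (as an additive map). -/
noncomputable def starTensor : H ⊗[k] H →+ H ⊗[k] H :=
  TensorProduct.liftAddHom
    { toFun := fun x =>
        { toFun := fun y => star x ⊗ₜ[k] star y
          map_zero' := by simp
          map_add' := fun y₁ y₂ => by simp [star_add, TensorProduct.tmul_add] }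
      map_zero' := by ext y; simp
      map_add' := fun x₁ x₂ => by ext y; simp [star_add, TensorProduct.add_tmul] }
    (fun r x y => by
      simp only [AddMonoidHom.coe_mk, ZeroHom.coe_mk, star_smul]
      rw [TensorProduct.smul_tmul])

/-- `H` is a Hopf `*`-algebra: `Δ(h*) = h₍₁₎* ⊗ h₍₂₎*`, `ε(h*) = ε(h)*`, and
`S ∘ * ∘ S ∘ * = id`. -/
def IsHopfStar (k H : Type*) [CommRing k] [StarRing k]
    [Ring H] [HopfAlgebra k H] [StarRing H] [StarModule k H] : Prop :=
  (∀ h : H, Coalgebra.comul (R := k) (star h) = starTensor (Coalgebra.comul (R := k) h)) ∧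
  (∀ h : H, Coalgebra.counit (R := k) (star h) = star (Coalgebra.counit (R := k) h)) ∧
  (∀ h : H, HopfAlgebra.antipode (R := k) (star (HopfAlgebra.antipode (R := k) (star h))) = h)

end ConvolutionFramework

section ModuleAlgebra

/-- A right `H`-module `*`-algebra `B`: a right action `act` of `H` on `B` such that the
multiplication and unit of `B` are `H`-linear in the Hopf sense and the action is
compatible with the `*`-structures. -/
structure RightHopfModuleStarAlgebra (k H B : Type*) [CommRing k] [StarRing k]
    [Ring H] [HopfAlgebra k H] [StarRing H] [StarModule k H]
    [Ring B] [Algebra k B] [StarRing B] [StarModule k B] where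
  act : B →ₗ[k] H →ₗ[k] B
  act_one : ∀ b : B, act b 1 = b
  act_mul : ∀ (b : B) (h h' : H), act b (h * h') = act (act b h) h'
  act_algebra_mul : ∀ b₁ b₂ : B,
    act (b₁ * b₂) = LinearMap.mul' k B ∘ₗ TensorProduct.map (act b₁) (act b₂) ∘ₗ Coalgebra.comul
  act_algebra_one : act 1 = Algebra.linearMap k B ∘ₗ Coalgebra.counit
  act_star : ∀ (b : B) (h : H),
    star (act b h) = act (star b) (star (HopfAlgebra.antipode (R := k) h))

/-- A right `H`-equivariant `B`-`*`-bimodule `M`: commuting left and right `B`-actions,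
a right `H`-action, the `*`-structure compatibilities, and Hopf-equivariance of the
`B`-actions. -/
structure EquivStarBimodule (k H B M : Type*) [CommRing k] [StarRing k]
    [Ring H] [HopfAlgebra k H] [StarRing H] [StarModule k H]
    [Ring B] [Algebra k B] [StarRing B] [StarModule k B]
    [AddCommGroup M] [Module k M] [StarAddMonoid M] [StarModule k M]
    (ρ : RightHopfModuleStarAlgebra k H B) where
  lact : B →ₗ[k] M →ₗ[k] M
  ract : M →ₗ[k] B →ₗ[k] M
  hact : M →ₗ[k] H →ₗ[k] M
  lact_one : ∀ m : M, lact 1 m = m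
  lact_mul : ∀ (b₁ b₂ : B) (m : M), lact (b₁ * b₂) m = lact b₁ (lact b₂ m)
  ract_one : ∀ m : M, ract m 1 = m
  ract_mul : ∀ (m : M) (b₁ b₂ : B), ract m (b₁ * b₂) = ract (ract m b₁) b₂
  middle : ∀ (b₁ : B) (m : M) (b₂ : B), ract (lact b₁ m) b₂ = lact b₁ (ract m b₂)
  star_compat : ∀ (b₁ : B) (m : M) (b₂ : B),
    star (lact b₁ (ract m b₂)) = lact (star b₂) (ract (star m) (star b₁))
  hact_one : ∀ m : M, hact m 1 = m
  hact_mul : ∀ (m : M) (h h' : H), hact m (h * h') = hact (hact m h) h'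
  hact_lact : ∀ (b : B) (m : M), hact (lact b m) =
    TensorProduct.lift lact ∘ₗ TensorProduct.map (ρ.act b) (hact m) ∘ₗ Coalgebra.comul
  hact_ract : ∀ (m : M) (b : B), hact (ract m b) =
    TensorProduct.lift ract ∘ₗ TensorProduct.map (hact m) (ρ.act b) ∘ₗ Coalgebra.comul
  hact_star : ∀ (m : M) (h : H),
    star (hact m h) = hact (star m) (star (HopfAlgebra.antipode (R := k) h))

variable {k H B M : Type*} [CommRing k] [StarRing k]
  [Ring H] [HopfAlgebra k H] [StarRing H] [StarModule k H]
  [Ring B] [Algebra k B] [StarRing B] [StarModule k B]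
  [AddCommGroup M] [Module k M] [StarAddMonoid M] [StarModule k M]
  {ρ : RightHopfModuleStarAlgebra k H B}

/-- The left convolution action of `C(H,B)` on `C(H,M)`: `(f ⋆ μ)(h) = f(h₍₁₎) • μ(h₍₂₎)`. -/
noncomputable def convL (S : EquivStarBimodule k H B M ρ)
    (f : H →ₗ[k] B) (μ : H →ₗ[k] M) : H →ₗ[k] M :=
  TensorProduct.lift S.lact ∘ₗ TensorProduct.map f μ ∘ₗ Coalgebra.comul

/-- The right convolution action of `C(H,B)` on `C(H,M)`: `(μ ⋆ f)(h) = μ(h₍₁₎) • f(h₍₂₎)`. -/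
noncomputable def convR (S : EquivStarBimodule k H B M ρ)
    (μ : H →ₗ[k] M) (f : H →ₗ[k] B) : H →ₗ[k] M :=
  TensorProduct.lift S.ract ∘ₗ TensorProduct.map μ f ∘ₗ Coalgebra.comul

/-- A lazy Sweedler 1-cocycle: a unitary `σ` of `C(H,B)` centralizing
`ρ_B(B) ⊕ ρ_M(M)`, with `σ(1) = 1` and `σ(hk) = (σ(h) ◁ k₍₁₎) σ(k₍₂₎)`. -/
noncomputable def IsLazySweedlerCocycle (S : EquivStarBimodule k H B M ρ)
    (σ : H →ₗ[k] B) : Prop :=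
  conv σ (convStar σ) = convOne ∧
  conv (convStar σ) σ = convOne ∧
  (∀ b : B, conv σ (ρ.act b) = conv (ρ.act b) σ) ∧
  (∀ m : M, convL S σ (S.hact m) = convR S (S.hact m) σ) ∧
  σ 1 = 1 ∧
  (∀ h : H, σ ∘ₗ LinearMap.mulLeft k h =
    LinearMap.mul' k B ∘ₗ TensorProduct.map (ρ.act (σ h)) σ ∘ₗ Coalgebra.comul)

/-- A lazy Hochschild 1-cocycle: a self-adjoint `μ ∈ C(H,M)` centralizing `ρ_B(B)`,
with `μ(1) = 0` and `μ(hk) = μ(h) ◁ k + ε(h) μ(k)`. -/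
noncomputable def IsLazyHochschildCocycle (S : EquivStarBimodule k H B M ρ)
    (μ : H →ₗ[k] M) : Prop :=
  convStar μ = μ ∧
  (∀ b : B, convL S (ρ.act b) μ = convR S μ (ρ.act b)) ∧
  μ 1 = 0 ∧
  (∀ h : H, μ ∘ₗ LinearMap.mulLeft k h = S.hact (μ h) + Coalgebra.counit (R := k) h • μ)

/-- `υ` is a unitary of `Cent_B(B ⊕ M)`: a unitary of `B` commuting with all of `B` and
centralizing `M`. -/
def IsCentralUnitary (S : EquivStarBimodule k H B M ρ) (υ : B) : Prop :=
  υ * star υ = 1 ∧ star υ * υ = 1 ∧ (∀ b : B, υ * b = b * υ) ∧ ∀ m : M, S.lact υ m = S.ract m υ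

/-- The Sweedler coboundary `Dυ(h) := (υ ◁ h) υ*`. -/
noncomputable def sweedlerCobound (ρ : RightHopfModuleStarAlgebra k H B) (υ : B) :
    H →ₗ[k] B :=
  LinearMap.mulRight k (star υ) ∘ₗ ρ.act υ

/-- The Hochschild coboundary `Dm(h) := m ◁ h - ε(h) m`. -/
noncomputable def hochCobound (S : EquivStarBimodule k H B M ρ) (m : M) : H →ₗ[k] M :=
  S.hact m - LinearMap.smulRight (Coalgebra.counit (R := k)) m

/-- An `H`-equivariant `*`-derivation `der : B → M`. -/
def IsEquivStarDerivation (S : EquivStarBimodule k H B M ρ) (der : B →ₗ[k] M) : Prop :=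
  (∀ b₁ b₂ : B, der (b₁ * b₂) = S.ract (der b₁) b₂ + S.lact b₁ (der b₂)) ∧
  (∀ b : B, der (star b) = - star (der b)) ∧
  (∀ (b : B) (h : H), der (ρ.act b h) = S.hact (der b) h)

/-- The Maurer–Cartan cocycle `MC[der](σ)(h) := -derσ(h₍₁₎) • σ*(h₍₂₎)`. -/
noncomputable def mcCocycle (S : EquivStarBimodule k H B M ρ) (der : B →ₗ[k] M)
    (σ : H →ₗ[k] B) : H →ₗ[k] M :=
  - (TensorProduct.lift S.ract ∘ₗ TensorProduct.map (der ∘ₗ σ) (convStar σ) ∘ₗ Coalgebra.comul)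

end ModuleAlgebra

namespace MC
open Coalgebra

variable {k : Type*} [CommRing k]
variable {C : Type*} [AddCommGroup C] [Module k C] [Coalgebra k C]
variable {P Q V W U R' A : Type*}
  [AddCommGroup P] [Module k P] [AddCommGroup Q] [Module k Q]
  [AddCommGroup V] [Module k V] [AddCommGroup W] [Module k W]
  [AddCommGroup U] [Module k U] [AddCommGroup R'] [Module k R']
  [AddCommGroup A] [Module k A]

/-- generalized convolution -/
noncomputable def cgen (β : P →ₗ[k] Q →ₗ[k] V) (f : C →ₗ[k] P) (g : C →ₗ[k] Q) : C →ₗ[k] V :=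
  TensorProduct.lift β ∘ₗ TensorProduct.map f g ∘ₗ Coalgebra.comul

noncomputable def cunit (u : P) : C →ₗ[k] P := (Coalgebra.counit (R := k)).smulRight u

lemma cunit_apply (u : P) (c : C) : (cunit u : C →ₗ[k] P) c = counit (R := k) c • u := rfl

lemma cgen_apply (β : P →ₗ[k] Q →ₗ[k] V) (f : C →ₗ[k] P) (g : C →ₗ[k] Q) {c : C} {ι : Type*}
    (r : Coalgebra.Repr k c ι) :
    cgen β f g c = ∑ i ∈ r.index, β (f (r.left i)) (g (r.right i)) := by
  simp only [cgen, LinearMap.coe_comp, Function.comp_apply, ← r.eq, map_sum,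
    TensorProduct.map_tmul, TensorProduct.lift.tmul]

lemma counit_sum_left {c : C} {ι : Type*} (r : Coalgebra.Repr k c ι) :
    ∑ i ∈ r.index, counit (R := k) (r.left i) • r.right i = c := by
  have := congrArg (TensorProduct.lid k C) (Coalgebra.sum_counit_tmul_eq r)
  simp only [map_sum, TensorProduct.lid_tmul] at this
  simpa using this

lemma counit_sum_right {c : C} {ι : Type*} (r : Coalgebra.Repr k c ι) :
    ∑ i ∈ r.index, counit (R := k) (r.right i) • r.left i = c := by
  have := congrArg (TensorProduct.rid k C) (Coalgebra.sum_tmul_counit_eq r)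
  simp only [map_sum, TensorProduct.rid_tmul] at this
  simpa using this

lemma cgen_cunit_left (β : P →ₗ[k] Q →ₗ[k] V) (u : P) (g : C →ₗ[k] Q) :
    cgen β (cunit u) g = (β u) ∘ₗ g := by
  refine LinearMap.ext fun c => ?_
  rw [cgen_apply β _ g (ℛ k c)]
  simp only [cunit_apply, map_smul, LinearMap.smul_apply]
  calc ∑ i ∈ (ℛ k c).index, counit (R := k) ((ℛ k c).left i) • β u (g ((ℛ k c).right i))
      = β u (g (∑ i ∈ (ℛ k c).index, counit (R := k) ((ℛ k c).left i) • (ℛ k c).right i)) := by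
        simp [map_sum]
    _ = _ := by rw [counit_sum_left (ℛ k c)]; rfl
lemma cgen_cunit_right (β : P →ₗ[k] Q →ₗ[k] V) (u : Q) (f : C →ₗ[k] P) :
    cgen β f (cunit u) = (β.flip u) ∘ₗ f := by
  refine LinearMap.ext fun c => ?_
  rw [cgen_apply β f _ (ℛ k c)]
  simp only [cunit_apply, map_smul, LinearMap.smul_apply]
  calc ∑ i ∈ (ℛ k c).index, counit (R := k) ((ℛ k c).right i) • β (f ((ℛ k c).left i)) u
      = β (f (∑ i ∈ (ℛ k c).index, counit (R := k) ((ℛ k c).right i) • (ℛ k c).left i)) u := by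
        simp [map_sum, LinearMap.sum_apply]
    _ = _ := by rw [counit_sum_right (ℛ k c)]; rfl

lemma cgen_assoc (α : P →ₗ[k] Q →ₗ[k] U) (β : U →ₗ[k] R' →ₗ[k] V)
    (γ : Q →ₗ[k] R' →ₗ[k] W) (δ : P →ₗ[k] W →ₗ[k] V)
    (compat : ∀ p q r, β (α p q) r = δ p (γ q r))
    (f : C →ₗ[k] P) (g : C →ₗ[k] Q) (w : C →ₗ[k] R') :
    cgen β (cgen α f g) w = cgen δ f (cgen γ g w) := by
  refine LinearMap.ext fun c => ?_
  set r := ℛ k c with hr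
  have key := Coalgebra.sum_tmul_tmul_eq r (fun i => ℛ k (r.left i)) (fun i => ℛ k (r.right i))
  have key2 := congrArg
    (TensorProduct.lift δ ∘ₗ TensorProduct.map f (TensorProduct.lift γ ∘ₗ TensorProduct.map g w))
    key
  simp only [map_sum, LinearMap.coe_comp, Function.comp_apply, TensorProduct.map_tmul,
    TensorProduct.lift.tmul] at key2
  rw [cgen_apply _ _ _ r, cgen_apply _ _ _ r]
  calc ∑ i ∈ r.index, β (cgen α f g (r.left i)) (w (r.right i))
      = ∑ i ∈ r.index, ∑ j ∈ (ℛ k (r.left i)).index,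
          β (α (f ((ℛ k (r.left i)).left j)) (g ((ℛ k (r.left i)).right j))) (w (r.right i)) := by
        refine Finset.sum_congr rfl fun i _ => ?_
        rw [cgen_apply _ _ _ (ℛ k (r.left i)), map_sum, LinearMap.sum_apply]
    _ = ∑ i ∈ r.index, ∑ j ∈ (ℛ k (r.right i)).index,
          δ (f (r.left i)) (γ (g ((ℛ k (r.right i)).left j)) (w ((ℛ k (r.right i)).right j))) := by
        simp only [compat]; exact key2
    _ = ∑ i ∈ r.index, δ (f (r.left i)) (cgen γ g w (r.right i)) := by
        refine Finset.sum_congr rfl fun i _ => ?_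
        rw [cgen_apply _ _ _ (ℛ k (r.right i)), map_sum]


lemma cgen_add_left (β : P →ₗ[k] Q →ₗ[k] V) (f f' : C →ₗ[k] P) (g : C →ₗ[k] Q) :
    cgen β (f + f') g = cgen β f g + cgen β f' g := by
  refine LinearMap.ext fun c => ?_
  rw [LinearMap.add_apply, cgen_apply _ _ _ (ℛ k c), cgen_apply _ _ _ (ℛ k c),
    cgen_apply _ _ _ (ℛ k c), ← Finset.sum_add_distrib]
  simp

lemma cgen_add_right (β : P →ₗ[k] Q →ₗ[k] V) (f : C →ₗ[k] P) (g g' : C →ₗ[k] Q) :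
    cgen β f (g + g') = cgen β f g + cgen β f g' := by
  refine LinearMap.ext fun c => ?_
  rw [LinearMap.add_apply, cgen_apply _ _ _ (ℛ k c), cgen_apply _ _ _ (ℛ k c),
    cgen_apply _ _ _ (ℛ k c), ← Finset.sum_add_distrib]
  simp

lemma cgen_neg_left (β : P →ₗ[k] Q →ₗ[k] V) (f : C →ₗ[k] P) (g : C →ₗ[k] Q) :
    cgen β (-f) g = - cgen β f g := by
  refine LinearMap.ext fun c => ?_
  rw [LinearMap.neg_apply, cgen_apply _ _ _ (ℛ k c), cgen_apply _ _ _ (ℛ k c)]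
  simp

lemma cgen_neg_right (β : P →ₗ[k] Q →ₗ[k] V) (f : C →ₗ[k] P) (g : C →ₗ[k] Q) :
    cgen β f (-g) = - cgen β f g := by
  refine LinearMap.ext fun c => ?_
  rw [LinearMap.neg_apply, cgen_apply _ _ _ (ℛ k c), cgen_apply _ _ _ (ℛ k c)]
  simp

lemma cgen_smul_left (β : P →ₗ[k] Q →ₗ[k] V) (a : k) (f : C →ₗ[k] P) (g : C →ₗ[k] Q) :
    cgen β (a • f) g = a • cgen β f g := by
  refine LinearMap.ext fun c => ?_
  rw [LinearMap.smul_apply, cgen_apply _ _ _ (ℛ k c), cgen_apply _ _ _ (ℛ k c),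
    Finset.smul_sum]
  simp

lemma cgen_sum_left {ι : Type*} (s : Finset ι) (β : P →ₗ[k] Q →ₗ[k] V)
    (f : ι → (C →ₗ[k] P)) (g : C →ₗ[k] Q) :
    cgen β (∑ i ∈ s, f i) g = ∑ i ∈ s, cgen β (f i) g := by
  classical
  induction s using Finset.induction_on with
  | empty => simp [cgen]
  | insert _ _ h ih =>
      rw [Finset.sum_insert h, Finset.sum_insert h, cgen_add_left, ih]

lemma cgen_postcomp (β : P →ₗ[k] Q →ₗ[k] V) (Φ : V →ₗ[k] W) (f : C →ₗ[k] P) (g : C →ₗ[k] Q) :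
    Φ ∘ₗ cgen β f g = cgen (β.compr₂ Φ) f g := by
  refine LinearMap.ext fun c => ?_
  rw [LinearMap.comp_apply, cgen_apply _ _ _ (ℛ k c), cgen_apply _ _ _ (ℛ k c), map_sum]
  rfl

lemma cgen_precomp_left (β : P →ₗ[k] Q →ₗ[k] V) (φ : U →ₗ[k] P) (f : C →ₗ[k] U)
    (g : C →ₗ[k] Q) : cgen (β ∘ₗ φ) f g = cgen β (φ ∘ₗ f) g := by
  refine LinearMap.ext fun c => ?_
  rw [cgen_apply _ _ _ (ℛ k c), cgen_apply _ _ _ (ℛ k c)]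
  rfl

lemma cgen_precomp_right (β : P →ₗ[k] Q →ₗ[k] V) (φ : U →ₗ[k] Q) (f : C →ₗ[k] P)
    (g : C →ₗ[k] U) : cgen (β.compl₂ φ) f g = cgen β f (φ ∘ₗ g) := by
  refine LinearMap.ext fun c => ?_
  rw [cgen_apply _ _ _ (ℛ k c), cgen_apply _ _ _ (ℛ k c)]
  rfl

lemma comp_cunit (Φ : P →ₗ[k] Q) (u : P) :
    Φ ∘ₗ (cunit u : C →ₗ[k] P) = cunit (Φ u) := by
  refine LinearMap.ext fun c => ?_
  simp [cunit_apply]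

/-- uniqueness of convolution inverses for a generalized product -/
lemma cgen_inv_unique (β : A →ₗ[k] A →ₗ[k] A)
    (hassoc : ∀ a b c, β (β a b) c = β a (β b c)) (u : A)
    (hul : ∀ a, β u a = a) (hur : ∀ a, β a u = a)
    {f a g : C →ₗ[k] A} (h1 : cgen β f a = cunit u) (h2 : cgen β a g = cunit u) :
    f = g := by
  have e1 : cgen β f (cunit u) = f := by
    rw [cgen_cunit_right]
    refine LinearMap.ext fun c => ?_
    simp [hur]
  have e2 : cgen β (cunit u) g = g := by
    rw [cgen_cunit_left]
    refine LinearMap.ext fun c => ?_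
    simp [hul]
  calc f = cgen β f (cgen β a g) := by rw [h2, e1]
    _ = cgen β (cgen β f a) g := (cgen_assoc β β β β hassoc f a g).symm
    _ = g := by rw [h1, e2]


lemma cgen_smul_right (β : P →ₗ[k] Q →ₗ[k] V) (a : k) (f : C →ₗ[k] P) (g : C →ₗ[k] Q) :
    cgen β f (a • g) = a • cgen β f g := by
  refine LinearMap.ext fun c => ?_
  rw [LinearMap.smul_apply, cgen_apply _ _ _ (ℛ k c), cgen_apply _ _ _ (ℛ k c),
    Finset.smul_sum]
  simp

section Alg
variable {A A' : Type*} [Ring A] [Algebra k A] [Ring A'] [Algebra k A']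

lemma cgen_comp_mul (Φ : A →ₗ[k] A') (hΦ : ∀ x y : A, Φ (x * y) = Φ x * Φ y)
    (f g : C →ₗ[k] A) :
    Φ ∘ₗ cgen (LinearMap.mul k A) f g = cgen (LinearMap.mul k A') (Φ ∘ₗ f) (Φ ∘ₗ g) := by
  refine LinearMap.ext fun c => ?_
  rw [LinearMap.comp_apply, cgen_apply _ _ _ (ℛ k c), cgen_apply _ _ _ (ℛ k c), map_sum]
  simp [hΦ]

lemma cv_assoc (f g w : C →ₗ[k] A) :
    cgen (LinearMap.mul k A) (cgen (LinearMap.mul k A) f g) w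
      = cgen (LinearMap.mul k A) f (cgen (LinearMap.mul k A) g w) :=
  cgen_assoc _ _ _ _ (fun p q r => mul_assoc p q r) f g w

lemma cv_one_left (g : C →ₗ[k] A) :
    cgen (LinearMap.mul k A) (cunit 1) g = g := by
  rw [cgen_cunit_left]
  refine LinearMap.ext fun c => ?_
  simp

lemma cv_one_right (f : C →ₗ[k] A) :
    cgen (LinearMap.mul k A) f (cunit 1) = f := by
  rw [cgen_cunit_right]
  refine LinearMap.ext fun c => ?_
  simp

end Alg

section Hopf
variable {H : Type*} [Ring H] [HopfAlgebra k H]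

open HopfAlgebra

/-- product of two representations, for a bialgebra -/
noncomputable def reprMul {x y : H} {ι₁ ι₂ : Type*} (r₁ : Coalgebra.Repr k x ι₁)
    (r₂ : Coalgebra.Repr k y ι₂) :
    Coalgebra.Repr k (x * y) (ι₁ × ι₂) where
  index := r₁.index ×ˢ r₂.index
  left := fun p => r₁.left p.1 * r₂.left p.2
  right := fun p => r₁.right p.1 * r₂.right p.2
  eq := by
    rw [Finset.sum_product, Bialgebra.comul_mul, ← r₁.eq, ← r₂.eq, Finset.sum_mul_sum]
    simp [Algebra.TensorProduct.tmul_mul_tmul]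

lemma cv_antipode_id :
    cgen (LinearMap.mul k H) (antipode (R := k)) LinearMap.id = cunit 1 := by
  have h := HopfAlgebra.mul_antipode_rTensor_comul (R := k) (A := H)
  have : cgen (LinearMap.mul k H) (antipode (R := k)) LinearMap.id
      = LinearMap.mul' k H ∘ₗ (antipode (R := k)).rTensor H ∘ₗ Coalgebra.comul := by
    rfl
  rw [this, h]
  refine LinearMap.ext fun c => ?_
  simp [cunit_apply, Algebra.algebraMap_eq_smul_one]

lemma cv_id_antipode :
    cgen (LinearMap.mul k H) LinearMap.id (antipode (R := k)) = cunit 1 := by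
  have h := HopfAlgebra.mul_antipode_lTensor_comul (R := k) (A := H)
  have : cgen (LinearMap.mul k H) LinearMap.id (antipode (R := k))
      = LinearMap.mul' k H ∘ₗ (antipode (R := k)).lTensor H ∘ₗ Coalgebra.comul := by
    rfl
  rw [this, h]
  refine LinearMap.ext fun c => ?_
  simp [cunit_apply, Algebra.algebraMap_eq_smul_one]


lemma antipode_one' : antipode (R := k) (1 : H) = 1 := by
  have := LinearMap.congr_fun (cv_antipode_id (k := k) (H := H)) 1
  rw [cgen, LinearMap.comp_apply, LinearMap.comp_apply, Bialgebra.comul_one,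
    Algebra.TensorProduct.one_def] at this
  simpa [cunit_apply] using this

lemma counit_antipode' (h : H) :
    Coalgebra.counit (R := k) (antipode (R := k) h) = Coalgebra.counit (R := k) h := by
  set r := ℛ k h with hr
  have e1 : Coalgebra.counit (R := k) ((cgen (LinearMap.mul k H) (antipode (R := k))
      LinearMap.id) h) = Coalgebra.counit (R := k) h := by
    rw [cv_antipode_id]
    simp [cunit_apply]
  rw [cgen_apply _ _ _ r, map_sum] at e1
  simp only [Bialgebra.counit_mul, LinearMap.id_coe, id_eq, LinearMap.mul_apply'] at e1
  calc Coalgebra.counit (R := k) (antipode (R := k) h)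
      = Coalgebra.counit (R := k) (antipode (R := k)
          (∑ i ∈ r.index, Coalgebra.counit (R := k) (r.right i) • r.left i)) := by
        rw [counit_sum_right r]
    _ = ∑ i ∈ r.index, Coalgebra.counit (R := k) (antipode (R := k) (r.left i)) *
          Coalgebra.counit (R := k) (r.right i) := by
        rw [map_sum, map_sum]
        refine Finset.sum_congr rfl fun i _ => ?_
        rw [map_smul, map_smul, smul_eq_mul, mul_comm]
    _ = Coalgebra.counit (R := k) h := e1


noncomputable def convBil : (H →ₗ[k] H) →ₗ[k] (H →ₗ[k] H) →ₗ[k] (H →ₗ[k] H) :=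
  LinearMap.mk₂ k (fun f g => cgen (LinearMap.mul k H) f g)
    (fun _ _ _ => cgen_add_left _ _ _ _)
    (fun _ _ _ => cgen_smul_left _ _ _ _)
    (fun _ _ _ => cgen_add_right _ _ _ _)
    (fun _ _ _ => cgen_smul_right _ _ _ _)

lemma convBil_apply (f g : H →ₗ[k] H) :
    (convBil (k := k) (H := H)) f g = cgen (LinearMap.mul k H) f g := rfl

lemma antipode_mul' (x y : H) :
    antipode (R := k) (x * y) = antipode (R := k) y * antipode (R := k) x := by
  set S := antipode (R := k) (A := H) with hS
  set Ft : H →ₗ[k] (H →ₗ[k] H) := (LinearMap.llcomp k H H H S) ∘ₗ LinearMap.mul k H with hFt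
  set Gt : H →ₗ[k] (H →ₗ[k] H) :=
    (LinearMap.lcomp k H S) ∘ₗ (LinearMap.mul k H).flip ∘ₗ S with hGt
  have h1 : cgen convBil Ft (LinearMap.mul k H) = cunit (cunit 1) := by
    refine LinearMap.ext fun x => LinearMap.ext fun y => ?_
    set rx := ℛ k x with hrx
    set ry := ℛ k y with hry
    rw [cgen_apply _ _ _ rx, LinearMap.sum_apply]
    have e : ∀ i ∈ rx.index,
        (convBil (Ft (rx.left i)) ((LinearMap.mul k H) (rx.right i))) y
          = ∑ j ∈ ry.index, S (rx.left i * ry.left j) * (rx.right i * ry.right j) := by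
      intro i _
      rw [convBil_apply, cgen_apply _ _ _ ry]
      simp [hFt, hS]
    rw [Finset.sum_congr rfl e, ← Finset.sum_product']
    have this2 : ∑ p ∈ rx.index ×ˢ ry.index,
        antipode (R := k) (rx.left p.1 * ry.left p.2) * (rx.right p.1 * ry.right p.2)
          = algebraMap k H (Coalgebra.counit (R := k) (x * y)) :=
      HopfAlgebra.sum_antipode_mul_eq_algebraMap_counit (R := k) (reprMul rx ry)
    rw [hS, this2]
    simp [cunit_apply, Algebra.algebraMap_eq_smul_one, Bialgebra.counit_mul, smul_smul,
      mul_comm]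
  have h2 : cgen convBil (LinearMap.mul k H) Gt = cunit (cunit 1) := by
    refine LinearMap.ext fun x => LinearMap.ext fun y => ?_
    set rx := ℛ k x with hrx
    set ry := ℛ k y with hry
    rw [cgen_apply _ _ _ rx, LinearMap.sum_apply]
    have e : ∀ i ∈ rx.index,
        (convBil ((LinearMap.mul k H) (rx.left i)) (Gt (rx.right i))) y
          = Coalgebra.counit (R := k) y • (rx.left i * S (rx.right i)) := by
      intro i _
      rw [convBil_apply, cgen_apply _ _ _ ry]
      simp only [hGt, LinearMap.mul_apply', LinearMap.coe_comp, Function.comp_apply,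
        LinearMap.lcomp_apply, LinearMap.flip_apply]
      calc ∑ j ∈ ry.index, rx.left i * ry.left j * (S (ry.right j) * S (rx.right i))
          = ∑ j ∈ ry.index, rx.left i * ((ry.left j * S (ry.right j)) * S (rx.right i)) := by
            refine Finset.sum_congr rfl fun j _ => ?_
            rw [mul_assoc, ← mul_assoc (ry.left j)]
        _ = rx.left i * ((∑ j ∈ ry.index, ry.left j * S (ry.right j)) * S (rx.right i)) := by
            rw [← Finset.mul_sum, ← Finset.sum_mul]
        _ = Coalgebra.counit (R := k) y • (rx.left i * S (rx.right i)) := by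
            rw [hS, HopfAlgebra.sum_mul_antipode_eq_smul ry, smul_mul_assoc, one_mul,
              mul_smul_comm]
    rw [Finset.sum_congr rfl e, ← Finset.smul_sum, hS,
      HopfAlgebra.sum_mul_antipode_eq_smul rx]
    simp only [cunit_apply, LinearMap.smul_apply, smul_smul]
    rw [mul_comm]
  clear_value Ft Gt S
  have hA : ∀ a b c : H →ₗ[k] H, convBil (convBil a b) c = convBil a (convBil b c) :=
    fun a b c => cv_assoc a b c
  have hL : ∀ a : H →ₗ[k] H, convBil (cunit 1) a = a := fun a => cv_one_left a
  have hR : ∀ a : H →ₗ[k] H, convBil a (cunit 1) = a := fun a => cv_one_right a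
  have t1 := cgen_inv_unique (f := Ft) (a := LinearMap.mul k H) (g := Gt) convBil hA (cunit 1) hL hR
  have key : Ft = Gt := t1 h1 h2
  have := LinearMap.congr_fun (LinearMap.congr_fun key x) y
  simpa [hFt, hGt, hS] using this


lemma comul_eq_cgen :
    (Coalgebra.comul : H →ₗ[k] H ⊗[k] H)
      = cgen (TensorProduct.mk k H H) LinearMap.id LinearMap.id := by
  rw [cgen, TensorProduct.map_id, TensorProduct.lift_mk]
  ext h; simp

lemma comul_antipode' (h : H) :
    Coalgebra.comul (R := k) (antipode (R := k) h)
      = TensorProduct.map (antipode (R := k)) (antipode (R := k))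
          ((TensorProduct.comm k H H) (Coalgebra.comul (R := k) h)) := by
  set S := antipode (R := k) (A := H) with hS
  set mk2 := LinearMap.mul k (H ⊗[k] H) with hmk2
  set j : H →ₗ[k] H ⊗[k] H := TensorProduct.mk k H H 1 with hj
  set j' : H →ₗ[k] H ⊗[k] H := (TensorProduct.mk k H H).flip 1 with hj'
  set G : H →ₗ[k] H ⊗[k] H := cgen ((TensorProduct.mk k H H).flip) S S with hG
  set F : H →ₗ[k] H ⊗[k] H := Coalgebra.comul ∘ₗ S with hF
  have hjmul : ∀ x y : H, j (x * y) = j x * j y := by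
    intro x y; simp [hj, Algebra.TensorProduct.tmul_mul_tmul]
  have h2 : cgen mk2 Coalgebra.comul F = cunit 1 := by
    have e := cgen_comp_mul (C := H) (Φ := (Coalgebra.comul : H →ₗ[k] H ⊗[k] H))
      (fun x y => Bialgebra.comul_mul x y) LinearMap.id S
    rw [cv_id_antipode, comp_cunit, Bialgebra.comul_one, LinearMap.comp_id] at e
    rw [hF, hmk2]
    exact e.symm
  have h1 : cgen mk2 G Coalgebra.comul = cunit 1 := by
    have compat : ∀ (p q : H) (r : H ⊗[k] H),
        mk2 ((TensorProduct.mk k H H).flip p q) r = (mk2 ∘ₗ j) p ((mk2 ∘ₗ j') q r) := by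
      intro p q r
      simp only [hmk2, hj, hj', LinearMap.mul_apply', LinearMap.coe_comp, Function.comp_apply,
        LinearMap.flip_apply, TensorProduct.mk_apply]
      rw [← mul_assoc]
      congr 1
      simp [Algebra.TensorProduct.tmul_mul_tmul]
    have compat2 : ∀ (p q r : H),
        TensorProduct.mk k H H ((LinearMap.mul k H) p q) r
          = (mk2 ∘ₗ j') p (TensorProduct.mk k H H q r) := by
      intro p q r
      simp only [hmk2, hj', LinearMap.mul_apply', LinearMap.coe_comp, Function.comp_apply,
        TensorProduct.mk_apply, LinearMap.flip_apply]
      simp [Algebra.TensorProduct.tmul_mul_tmul]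
    have stepC : cgen (mk2 ∘ₗ j') S (Coalgebra.comul (R := k) (A := H)) = j := by
      rw [comul_eq_cgen,
        ← cgen_assoc (LinearMap.mul k H) (TensorProduct.mk k H H) (TensorProduct.mk k H H)
          (mk2 ∘ₗ j') compat2 S LinearMap.id LinearMap.id,
        hS, cv_antipode_id, cgen_cunit_left, LinearMap.comp_id, hj]
    rw [hG, cgen_assoc ((TensorProduct.mk k H H).flip) mk2 (mk2 ∘ₗ j') (mk2 ∘ₗ j) compat
      S S Coalgebra.comul, stepC, cgen_precomp_left mk2 j S j]
    have hj1 : j (1 : H) = 1 := by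
      rw [hj]; simp [Algebra.TensorProduct.one_def]
    have e2 := cgen_comp_mul (C := H) (Φ := j) hjmul (antipode (R := k)) LinearMap.id
    rw [cv_antipode_id, comp_cunit, LinearMap.comp_id, hj1] at e2
    rw [hS, hmk2]
    exact e2.symm
  have key : G = F := cgen_inv_unique mk2
    (fun a b c => mul_assoc a b c) 1 (fun a => one_mul a) (fun a => mul_one a) h1 h2
  have eG : G h = TensorProduct.map S S ((TensorProduct.comm k H H) (Coalgebra.comul h)) := by
    rw [hG, cgen_apply _ _ _ (ℛ k h), ← (ℛ k h).eq]
    simp [map_sum]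
  rw [← eG, key, hF]; rfl


lemma cgen_mulLeft (β : P →ₗ[k] Q →ₗ[k] V) (f : H →ₗ[k] P) (g : H →ₗ[k] Q) {h : H} {ι : Type*}
    (r : Coalgebra.Repr k h ι) :
    cgen β f g ∘ₗ LinearMap.mulLeft k h
      = ∑ i ∈ r.index,
          cgen β (f ∘ₗ LinearMap.mulLeft k (r.left i)) (g ∘ₗ LinearMap.mulLeft k (r.right i)) := by
  refine LinearMap.ext fun x => ?_
  rw [LinearMap.comp_apply, LinearMap.mulLeft_apply, LinearMap.sum_apply]
  have e0 : cgen β f g (h * x)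
      = ∑ p ∈ r.index ×ˢ (ℛ k x).index,
          β (f (r.left p.1 * (ℛ k x).left p.2)) (g (r.right p.1 * (ℛ k x).right p.2)) :=
    cgen_apply _ _ _ (reprMul r (ℛ k x))
  rw [e0, Finset.sum_product]
  refine Finset.sum_congr rfl fun i _ => ?_
  rw [cgen_apply _ _ _ (ℛ k x)]
  rfl

end Hopf
end MC

set_option linter.unusedSectionVars false
namespace MCMain
open MC HopfAlgebra Coalgebra

section Star
variable {k : Type*} [CommRing k] [StarRing k]
variable {H : Type*} [Ring H] [HopfAlgebra k H] [StarRing H] [StarModule k H]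
variable {B : Type*} [Ring B] [Algebra k B] [StarRing B] [StarModule k B]
variable {M : Type*} [AddCommGroup M] [Module k M] [StarAddMonoid M] [StarModule k M]

lemma conv_eq (f g : H →ₗ[k] B) : conv f g = cgen (LinearMap.mul k B) f g := rfl

lemma convOne_eq : (convOne : H →ₗ[k] B) = cunit 1 := by
  refine LinearMap.ext fun h => ?_
  simp [convOne, cunit_apply, Algebra.algebraMap_eq_smul_one]

lemma phi_phi (hH : IsHopfStar k H) (x : H) :
    star (antipode (R := k) (star (antipode (R := k) x))) = x := by
  have := hH.2.2 (star x)
  rw [star_star] at this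
  have := congrArg (star : H → H) this
  rwa [star_star] at this

lemma phi_mul (hH : IsHopfStar k H) (x y : H) :
    star (antipode (R := k) (x * y))
      = star (antipode (R := k) x) * star (antipode (R := k) y) := by
  rw [antipode_mul', star_mul]

/-- representation of `comul (star (antipode h))` -/
noncomputable def phiRepr (hH : IsHopfStar k H) {h : H} {ι : Type*} (r : Coalgebra.Repr k h ι) :
    Coalgebra.Repr k (star (antipode (R := k) h)) ι where
  index := r.index
  left := fun i => star (antipode (R := k) (r.right i))
  right := fun i => star (antipode (R := k) (r.left i))
  eq := by
    rw [hH.1, comul_antipode', ← r.eq, map_sum, map_sum, map_sum]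
    refine Finset.sum_congr rfl fun i _ => ?_
    simp [starTensor]

lemma convStar_apply (f : H →ₗ[k] M) (h : H) :
    convStar f h = star (f (star (antipode (R := k) h))) := rfl

lemma convStar_conv (hH : IsHopfStar k H) (f g : H →ₗ[k] B) :
    convStar (conv f g) = conv (convStar g) (convStar f) := by
  refine LinearMap.ext fun h => ?_
  set r := ℛ k h with hr
  rw [convStar_apply, conv_eq]
  have e : cgen (LinearMap.mul k B) f g (star (antipode (R := k) h))
      = ∑ i ∈ r.index, f (star (antipode (R := k) (r.right i)))
          * g (star (antipode (R := k) (r.left i))) :=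
    cgen_apply _ _ _ (phiRepr hH r)
  rw [e, star_sum]
  rw [conv_eq, cgen_apply _ _ _ r]
  refine Finset.sum_congr rfl fun i _ => ?_
  rw [star_mul]
  rfl

lemma convStar_convStar (hH : IsHopfStar k H) (f : H →ₗ[k] M) :
    convStar (convStar f) = f := by
  refine LinearMap.ext fun h => ?_
  rw [convStar_apply, convStar_apply, phi_phi hH, star_star]

end Star

section Main
variable {k H B M : Type*} [CommRing k] [StarRing k]
  [Ring H] [HopfAlgebra k H] [StarRing H] [StarModule k H]
  [Ring B] [Algebra k B] [StarRing B] [StarModule k B]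
  [AddCommGroup M] [Module k M] [StarAddMonoid M] [StarModule k M]
  {ρ : RightHopfModuleStarAlgebra k H B}

variable (S : EquivStarBimodule k H B M ρ)

lemma convL_eq (f : H →ₗ[k] B) (μ : H →ₗ[k] M) : convL S f μ = cgen S.lact f μ := rfl
lemma convR_eq (f : H →ₗ[k] B) (μ : H →ₗ[k] M) : convR S μ f = cgen S.ract μ f := rfl

lemma mc_eq (der : B →ₗ[k] M) (σ : H →ₗ[k] B) :
    mcCocycle S der σ = -(cgen S.ract (der ∘ₗ σ) (convStar σ)) := rfl

/-- associativity instances -/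
lemma ract_ract (μ : H →ₗ[k] M) (f g : H →ₗ[k] B) :
    cgen S.ract (cgen S.ract μ f) g = cgen S.ract μ (cgen (LinearMap.mul k B) f g) :=
  cgen_assoc _ _ _ _ (fun m b b' => (S.ract_mul m b b').symm) μ f g

lemma ract_lact (f : H →ₗ[k] B) (μ : H →ₗ[k] M) (g : H →ₗ[k] B) :
    cgen S.ract (cgen S.lact f μ) g = cgen S.lact f (cgen S.ract μ g) :=
  cgen_assoc _ _ _ _ (fun b m b' => S.middle b m b') f μ g

lemma lact_lact (f g : H →ₗ[k] B) (μ : H →ₗ[k] M) :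
    cgen S.lact (cgen (LinearMap.mul k B) f g) μ = cgen S.lact f (cgen S.lact g μ) :=
  cgen_assoc _ _ _ _ (fun b b' m => S.lact_mul b b' m) f g μ

lemma star_ract (m : M) (b : B) : star (S.ract m b) = S.lact (star b) (star m) := by
  have := S.star_compat 1 m b
  rwa [S.lact_one, star_one, S.ract_one] at this

lemma lact_one_map (μ : H →ₗ[k] M) : cgen S.lact (cunit 1) μ = μ := by
  rw [cgen_cunit_left]
  refine LinearMap.ext fun h => ?_
  simp [S.lact_one]

section Der
variable {S}
variable {der : B →ₗ[k] M} (hder : IsEquivStarDerivation S der)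
include hder

lemma der_one : der (1 : B) = 0 := by
  have := hder.1 1 1
  rw [mul_one, S.ract_one, S.lact_one] at this
  have h2 := congrArg (fun z => z - der (1 : B)) this
  simpa using h2.symm

lemma der_convOne : der ∘ₗ (convOne : H →ₗ[k] B) = 0 := by
  refine LinearMap.ext fun h => ?_
  simp [convOne_eq, cunit_apply, der_one hder]

lemma der_conv (f g : H →ₗ[k] B) :
    der ∘ₗ conv f g = cgen S.ract (der ∘ₗ f) g + cgen S.lact f (der ∘ₗ g) := by
  refine LinearMap.ext fun h => ?_
  rw [conv_eq, LinearMap.comp_apply, cgen_apply _ _ _ (ℛ k h), map_sum, LinearMap.add_apply,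
    cgen_apply _ _ _ (ℛ k h), cgen_apply _ _ _ (ℛ k h), ← Finset.sum_add_distrib]
  refine Finset.sum_congr rfl fun i _ => ?_
  exact hder.1 _ _

lemma der_act (b : B) : der ∘ₗ ρ.act b = S.hact (der b) := by
  refine LinearMap.ext fun h => ?_
  exact hder.2.2 b h

lemma star_der (b : B) : star (der b) = - der (star b) := by
  rw [hder.2.1 b, neg_neg]

end Der

section Sweedler
variable {S}
variable (hH : IsHopfStar k H) {σ : H →ₗ[k] B} (hσ : IsLazySweedlerCocycle S σ)
include hσ

lemma sw_unit1 : cgen (LinearMap.mul k B) σ (convStar σ) = cunit 1 := by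
  rw [← conv_eq, hσ.1, convOne_eq]

lemma sw_unit2 : cgen (LinearMap.mul k B) (convStar σ) σ = cunit 1 := by
  rw [← conv_eq, hσ.2.1, convOne_eq]

lemma sw_shift (h : H) :
    σ ∘ₗ LinearMap.mulLeft k h = cgen (LinearMap.mul k B) (ρ.act (σ h)) σ :=
  hσ.2.2.2.2.2 h

include hH in
lemma swstar_shift (h : H) :
    convStar σ ∘ₗ LinearMap.mulLeft k h
      = cgen (LinearMap.mul k B) (convStar σ) (ρ.act (convStar σ h)) := by
  refine LinearMap.ext fun x => ?_
  set r := ℛ k x with hr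
  rw [LinearMap.comp_apply, LinearMap.mulLeft_apply, convStar_apply, phi_mul hH]
  have e1 := LinearMap.congr_fun (sw_shift hσ (star (antipode (R := k) h)))
    (star (antipode (R := k) x))
  rw [LinearMap.comp_apply, LinearMap.mulLeft_apply] at e1
  rw [e1]
  have e2 : cgen (LinearMap.mul k B) (ρ.act (σ (star (antipode (R := k) h)))) σ
        (star (antipode (R := k) x))
      = ∑ i ∈ r.index,
          ρ.act (σ (star (antipode (R := k) h))) (star (antipode (R := k) (r.right i)))
            * σ (star (antipode (R := k) (r.left i))) :=
    cgen_apply _ _ _ (phiRepr hH r)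
  rw [e2, star_sum, cgen_apply _ _ _ r]
  refine Finset.sum_congr rfl fun i _ => ?_
  rw [star_mul, ρ.act_star, phi_phi hH]
  rfl

end Sweedler


section Core
variable {S}
variable (hH : IsHopfStar k H) {der : B →ₗ[k] M} (hder : IsEquivStarDerivation S der)
  {σ : H →ₗ[k] B} (hσ : IsLazySweedlerCocycle S σ)

lemma act_mul_cgen (b₁ b₂ : B) :
    ρ.act (b₁ * b₂) = cgen (LinearMap.mul k B) (ρ.act b₁) (ρ.act b₂) :=
  ρ.act_algebra_mul b₁ b₂

lemma act_one_cgen : ρ.act (1 : B) = (cunit 1 : H →ₗ[k] B) :=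
  ρ.act_algebra_one.trans convOne_eq

lemma hact_ract_cgen (m : M) (b : B) :
    S.hact (S.ract m b) = cgen S.ract (S.hact m) (ρ.act b) :=
  S.hact_ract m b

include hder hσ

lemma mc_key :
    cgen S.ract (der ∘ₗ σ) (convStar σ) = - cgen S.lact σ (der ∘ₗ convStar σ) := by
  have e := der_conv hder σ (convStar σ)
  rw [hσ.1, der_convOne hder] at e
  exact eq_neg_of_add_eq_zero_left e.symm

lemma dsig_central (b : B) :
    cgen S.ract (der ∘ₗ σ) (ρ.act b) = cgen S.lact (ρ.act b) (der ∘ₗ σ) := by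
  have h1 := der_conv hder σ (ρ.act b)
  have h2 := der_conv hder (ρ.act b) σ
  rw [hσ.2.2.1 b] at h1
  rw [der_act hder] at h1 h2
  have hcM : cgen S.lact σ (S.hact (der b)) = cgen S.ract (S.hact (der b)) σ :=
    hσ.2.2.2.1 (der b)
  rw [hcM] at h1
  have := h1.symm.trans h2
  -- cgen ract Dσ (act b) + cgen ract (hact (der b)) σ
  --   = cgen ract (hact (der b)) σ + cgen lact (act b) Dσ
  rw [add_comm (cgen S.ract (der ∘ₗ σ) (ρ.act b))] at this
  exact add_left_cancel this

lemma sigstar_central (b : B) :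
    cgen (LinearMap.mul k B) (convStar σ) (ρ.act b)
      = cgen (LinearMap.mul k B) (ρ.act b) (convStar σ) := by
  have hc : cgen (LinearMap.mul k B) σ (ρ.act b)
      = cgen (LinearMap.mul k B) (ρ.act b) σ := hσ.2.2.1 b
  calc cgen (LinearMap.mul k B) (convStar σ) (ρ.act b)
      = cgen (LinearMap.mul k B) (cgen (LinearMap.mul k B) (convStar σ) (ρ.act b)) (cunit 1) := by
        rw [cv_one_right]
    _ = cgen (LinearMap.mul k B) (cgen (LinearMap.mul k B) (convStar σ) (ρ.act b))
          (cgen (LinearMap.mul k B) σ (convStar σ)) := by rw [sw_unit1 hσ]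
    _ = cgen (LinearMap.mul k B) (convStar σ) (cgen (LinearMap.mul k B) (ρ.act b)
          (cgen (LinearMap.mul k B) σ (convStar σ))) := by rw [cv_assoc]
    _ = cgen (LinearMap.mul k B) (convStar σ) (cgen (LinearMap.mul k B)
          (cgen (LinearMap.mul k B) (ρ.act b) σ) (convStar σ)) := by rw [cv_assoc]
    _ = cgen (LinearMap.mul k B) (convStar σ) (cgen (LinearMap.mul k B)
          (cgen (LinearMap.mul k B) σ (ρ.act b)) (convStar σ)) := by rw [hc]
    _ = cgen (LinearMap.mul k B) (cgen (LinearMap.mul k B) (convStar σ) σ)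
          (cgen (LinearMap.mul k B) (ρ.act b) (convStar σ)) := by
        rw [cv_assoc, cv_assoc]
    _ = cgen (LinearMap.mul k B) (ρ.act b) (convStar σ) := by
        rw [sw_unit2 hσ, cv_one_left]

lemma nu_central (b : B) :
    cgen S.ract (cgen S.ract (der ∘ₗ σ) (convStar σ)) (ρ.act b)
      = cgen S.lact (ρ.act b) (cgen S.ract (der ∘ₗ σ) (convStar σ)) := by
  rw [ract_ract, sigstar_central hder hσ, ← ract_ract, dsig_central hder hσ, ract_lact]

lemma mc_central (b : B) :
    convL S (ρ.act b) (mcCocycle S der σ) = convR S (mcCocycle S der σ) (ρ.act b) := by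
  rw [convL_eq, convR_eq, mc_eq, cgen_neg_left, cgen_neg_right,
    nu_central hder hσ]

include hH in
lemma mc_selfadj : convStar (mcCocycle S der σ) = mcCocycle S der σ := by
  refine LinearMap.ext fun h => ?_
  set r := ℛ k h with hr
  rw [convStar_apply, mc_eq, LinearMap.neg_apply, star_neg]
  have e : cgen S.ract (der ∘ₗ σ) (convStar σ) (star (antipode (R := k) h))
      = ∑ i ∈ r.index, S.ract (der (σ (star (antipode (R := k) (r.right i)))))
          (convStar σ (star (antipode (R := k) (r.left i)))) :=
    cgen_apply _ _ _ (phiRepr hH r)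
  rw [e, star_sum]
  have e2 : ∀ i ∈ r.index,
      star (S.ract (der (σ (star (antipode (R := k) (r.right i)))))
          (convStar σ (star (antipode (R := k) (r.left i)))))
        = - S.lact (σ (r.left i)) (der (convStar σ (r.right i))) := by
    intro i _
    rw [star_ract]
    have b1 : star (convStar σ (star (antipode (R := k) (r.left i)))) = σ (r.left i) := by
      rw [convStar_apply, phi_phi hH, star_star]
    have b2 : star (der (σ (star (antipode (R := k) (r.right i)))))
        = - der (convStar σ (r.right i)) := by
      rw [star_der hder]
      rfl
    rw [b1, b2, map_neg]
  rw [Finset.sum_congr rfl e2, Finset.sum_neg_distrib, neg_neg]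
  have e3 : ∑ i ∈ r.index, S.lact (σ (r.left i)) (der (convStar σ (r.right i)))
      = cgen S.lact σ (der ∘ₗ convStar σ) h := (cgen_apply S.lact σ (der ∘ₗ convStar σ) r).symm
  rw [e3, mc_key hder hσ]
  simp

lemma mc_one : mcCocycle S der σ 1 = 0 := by
  rw [mc_eq, LinearMap.neg_apply]
  have : cgen S.ract (der ∘ₗ σ) (convStar σ) (1 : H)
      = S.ract (der (σ 1)) (convStar σ 1) := by
    rw [cgen, LinearMap.comp_apply, LinearMap.comp_apply, Bialgebra.comul_one,
      Algebra.TensorProduct.one_def]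
    simp
  rw [this, hσ.2.2.2.2.1, der_one hder]
  simp

include hH in
lemma mc_cocycle_cond (h : H) :
    mcCocycle S der σ ∘ₗ LinearMap.mulLeft k h
      = S.hact (mcCocycle S der σ h) + Coalgebra.counit (R := k) h • mcCocycle S der σ := by
  classical
  set r := ℛ k h with hr
  set Dσ : H →ₗ[k] M := der ∘ₗ σ with hDσ
  set sst : H →ₗ[k] B := convStar σ with hsst
  set ν : H →ₗ[k] M := cgen S.ract Dσ sst with hν
  have hshift : mcCocycle S der σ ∘ₗ LinearMap.mulLeft k h
      = -∑ i ∈ r.index, cgen S.ract (Dσ ∘ₗ LinearMap.mulLeft k (r.left i))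
          (sst ∘ₗ LinearMap.mulLeft k (r.right i)) := by
    rw [mc_eq, LinearMap.neg_comp, cgen_mulLeft _ _ _ r]
  have hterm : ∀ i ∈ r.index,
      cgen S.ract (Dσ ∘ₗ LinearMap.mulLeft k (r.left i))
          (sst ∘ₗ LinearMap.mulLeft k (r.right i))
        = cgen S.ract (S.hact (der (σ (r.left i)))) (ρ.act (sst (r.right i)))
          + cgen S.lact (ρ.act (σ (r.left i) * sst (r.right i))) ν := by
    intro i _
    have hD : Dσ ∘ₗ LinearMap.mulLeft k (r.left i)
        = cgen S.ract (S.hact (der (σ (r.left i)))) σ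
          + cgen S.lact (ρ.act (σ (r.left i))) Dσ := by
      rw [hDσ, LinearMap.comp_assoc, sw_shift hσ, ← conv_eq, der_conv hder,
        der_act hder]
    have hs : sst ∘ₗ LinearMap.mulLeft k (r.right i)
        = cgen (LinearMap.mul k B) sst (ρ.act (sst (r.right i))) := by
      rw [hsst, swstar_shift hH hσ]
    rw [hD, hs, cgen_add_left]
    congr 1
    · rw [ract_ract, ← cv_assoc, sw_unit1 hσ, cv_one_left]
    · rw [ract_lact, ← ract_ract, ← hν]
      have hcen : cgen S.ract ν (ρ.act (sst (r.right i)))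
          = cgen S.lact (ρ.act (sst (r.right i))) ν := nu_central hder hσ _
      rw [hcen, ← lact_lact, ← act_mul_cgen]
  rw [hshift, Finset.sum_congr rfl hterm, Finset.sum_add_distrib, neg_add]
  congr 1
  · -- -(∑ A_i) = S.hact (mc h)
    have hν_h : mcCocycle S der σ h = - ν h := rfl
    have e : ν h = ∑ i ∈ r.index, S.ract (der (σ (r.left i))) (sst (r.right i)) :=
      cgen_apply _ _ _ r
    rw [hν_h, map_neg, e, map_sum]
    congr 1
    exact Finset.sum_congr rfl fun i _ => (hact_ract_cgen _ _).symm
  · -- -(∑ B_i) = ε h • mc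
    have e1 : ∑ i ∈ r.index, cgen S.lact (ρ.act (σ (r.left i) * sst (r.right i))) ν
        = cgen S.lact (ρ.act (∑ i ∈ r.index, σ (r.left i) * sst (r.right i))) ν := by
      rw [map_sum, cgen_sum_left]
    have e2 : ∑ i ∈ r.index, σ (r.left i) * sst (r.right i)
        = cgen (LinearMap.mul k B) σ sst h := (cgen_apply (LinearMap.mul k B) σ sst r).symm
    rw [e1, e2, hsst, sw_unit1 hσ, cunit_apply, map_smul, cgen_smul_left,
      act_one_cgen, lact_one_map]
    rw [show mcCocycle S der σ = -ν from rfl]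
    simp

end Core

end Main
end MCMain

/-- Let `H` be a Hopf `*`-algebra, `B` a right `H`-module `*`-algebra,
`M` a right `H`-equivariant `B`-`*`-bimodule, and `der : B → M` an `H`-equivariant
`*`-derivation.  The Maurer–Cartan map `MC[der](σ)(h) := -der σ(h₍₁₎) • σ*(h₍₂₎)` sends
lazy Sweedler 1-cocycles to lazy Hochschild 1-cocycles, and is a group 1-cocycle for the
conjugation action: `MC[der](σ ⋆ τ) = MC[der](σ) + σ ⊳ MC[der](τ)`, where
`σ ⊳ μ := σ ⋆ μ ⋆ σ⁻¹`. -/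
theorem stmt11 {H B M : Type*}
    [Ring H] [HopfAlgebra ℂ H] [StarRing H] [StarModule ℂ H]
    [Ring B] [Algebra ℂ B] [StarRing B] [StarModule ℂ B]
    [AddCommGroup M] [Module ℂ M] [StarAddMonoid M] [StarModule ℂ M]
    (hH : IsHopfStar ℂ H)
    (ρ : RightHopfModuleStarAlgebra ℂ H B)
    (S : EquivStarBimodule ℂ H B M ρ)
    (der : B →ₗ[ℂ] M) (hder : IsEquivStarDerivation S der) :
    (∀ σ : H →ₗ[ℂ] B, IsLazySweedlerCocycle S σ →
      IsLazyHochschildCocycle S (mcCocycle S der σ)) ∧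
    (∀ σ τ σinv : H →ₗ[ℂ] B, IsLazySweedlerCocycle S σ → IsLazySweedlerCocycle S τ →
      conv σ σinv = convOne → conv σinv σ = convOne →
      mcCocycle S der (conv σ τ)
        = mcCocycle S der σ + convL S σ (convR S (mcCocycle S der τ) σinv)) := by
  constructor
  · intro σ hσ
    exact ⟨MCMain.mc_selfadj hH hder hσ, fun b => MCMain.mc_central hder hσ b,
      MCMain.mc_one hder hσ, fun h => MCMain.mc_cocycle_cond hH hder hσ h⟩
  · intro σ τ σinv hσ hτ hinv1 hinv2
    have hstar : convStar σ = σinv := by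
      refine MC.cgen_inv_unique (LinearMap.mul ℂ B) (fun a b c => mul_assoc a b c) 1
        (fun a => one_mul a) (fun a => mul_one a) (MCMain.sw_unit2 hσ) ?_
      rw [← MCMain.conv_eq, hinv1, MCMain.convOne_eq]
    rw [← hstar, MCMain.mc_eq, MCMain.der_conv hder σ τ, MCMain.convStar_conv hH σ τ,
      MCMain.conv_eq (convStar τ) (convStar σ), MC.cgen_add_left,
      MCMain.ract_ract, ← MC.cv_assoc, MCMain.sw_unit1 hτ, MC.cv_one_left,
      MCMain.ract_lact, ← MCMain.ract_ract,
      MCMain.convL_eq, MCMain.convR_eq, MCMain.mc_eq S der σ, MCMain.mc_eq S der τ,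
      MC.cgen_neg_left, MC.cgen_neg_right, neg_add]
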